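/- Let {𝓗,Γ} be a B-generalized boundary pair for A* with Weyl function M. Then the subspace 𝓗_s := closure of ran Im M(λ) is independent of λ ∈ ℂ∖ℝ, and there exist an ordinary boundary triple {𝓗_s, Γ₀⁰, Γ₁⁰} for A* with Weyl function M₀, a bounded selfadjoint operator E ∈ 𝓑(𝓗), and G ∈ 𝓑(𝓗,𝓗_s) with ker G = 𝓗 ⊖ 𝓗_s, such that Γ = {(f̂, (u, Eu + G*Γ₁⁰f̂)) : f̂ ∈ A*, u ∈ 𝓗, Gu = Γ₀⁰f̂} and M(λ) = G*M₀(λ)G + E for all λ ∈ ℂ∖ℝ. -/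

import Mathlib

noncomputable section

open Filter Topology

namespace BT

local notation "⟪" x ", " y "⟫" => @inner ℂ _ _ x y

section Ops
variable {α β γ' : Type*}

def domR (T : Set (α × β)) : Set α := {x | ∃ y, (x, y) ∈ T}
def ranR (T : Set (α × β)) : Set β := {y | ∃ x, (x, y) ∈ T}
def kerR [Zero β] (T : Set (α × β)) : Set α := {x | (x, (0 : β)) ∈ T}
def mulR [Zero α] (T : Set (α × β)) : Set β := {y | ((0 : α), y) ∈ T}
def invR (T : Set (α × β)) : Set (β × α) := {p | (p.2, p.1) ∈ T}
def compR (T₂ : Set (β × γ')) (T₁ : Set (α × β)) : Set (α × γ') :=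
  {p | ∃ y, (p.1, y) ∈ T₁ ∧ (y, p.2) ∈ T₂}
def csum [Add α] [Add β] (T₁ T₂ : Set (α × β)) : Set (α × β) :=
  {p | ∃ q ∈ T₁, ∃ r ∈ T₂, p = (q.1 + r.1, q.2 + r.2)}

def IsLinRel {M : Type*} [AddCommGroup M] [Module ℂ M] (s : Set M) : Prop :=
  ∃ p : Submodule ℂ M, (p : Set M) = s

def IsBddRel [Norm α] [Norm β] (T : Set (α × β)) : Prop :=
  ∃ C : ℝ, ∀ p ∈ T, ‖p.2‖ ≤ C * ‖p.1‖

def BddInv [NormedAddCommGroup α] (T : Set (α × α)) : Prop :=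
  (∀ v, ∃ p ∈ T, p.2 = v) ∧ (∀ p ∈ T, ∀ q ∈ T, p.2 = q.2 → p.1 = q.1) ∧
    ∃ C : ℝ, ∀ p ∈ T, ‖p.1‖ ≤ C * ‖p.2‖
end Ops

section Shifts
variable {α : Type*} [AddCommGroup α] [Module ℂ α]

def shiftSub (T : Set (α × α)) (l : ℂ) : Set (α × α) :=
  {p | ∃ q ∈ T, p = (q.1, q.2 - l • q.1)}
def shiftAdd (T : Set (α × α)) (l : ℂ) : Set (α × α) :=
  {p | ∃ q ∈ T, p = (q.1, q.2 + l • q.1)}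
def hatN (T : Set (α × α)) (l : ℂ) : Set (α × α) := {p ∈ T | p.2 = l • p.1}
def Nlam (T : Set (α × α)) (l : ℂ) : Set α := {f | (f, l • f) ∈ T}
def Hrel (A0s : Set (α × α)) (l : ℂ) : Set (α × (α × α)) :=
  {q | q.2 ∈ A0s ∧ q.2.2 - l • q.2.1 = q.1}
end Shifts

section InnerDefs
variable {E F : Type*} [NormedAddCommGroup E] [InnerProductSpace ℂ E]
  [NormedAddCommGroup F] [InnerProductSpace ℂ F]

def adjR (S : Set (F × E)) : Set (E × F) :=
  {p | ∀ q ∈ S, ⟪p.1, q.2⟫ = ⟪p.2, q.1⟫}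

def IsClosedSymRel (A : Set (E × E)) : Prop :=
  IsLinRel A ∧ IsClosed A ∧ A ⊆ adjR A

def kIP (p q : E × E) : ℂ := -Complex.I * ⟪q.1, p.2⟫ + Complex.I * ⟪q.2, p.1⟫

def kreinOrth (S : Set (E × E)) : Set (E × E) := {v | ∀ u ∈ S, kIP u v = 0}

def GreenPair (Γ : Set ((E × E) × (F × F))) : Prop :=
  ∀ p ∈ Γ, ∀ q ∈ Γ,
    ⟪q.1.1, p.1.2⟫ - ⟪q.1.2, p.1.1⟫ = ⟪q.2.1, p.2.2⟫ - ⟪q.2.2, p.2.1⟫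

def G0 (Γ : Set ((E × E) × (F × F))) : Set ((E × E) × F) := {p | ∃ h', (p.1, (p.2, h')) ∈ Γ}
def G1 (Γ : Set ((E × E) × (F × F))) : Set ((E × E) × F) := {p | ∃ h, (p.1, (h, p.2)) ∈ Γ}
def A0 (Γ : Set ((E × E) × (F × F))) : Set (E × E) := kerR (G0 Γ)
def A1 (Γ : Set ((E × E) × (F × F))) : Set (E × E) := kerR (G1 Γ)
def weyl (Γ : Set ((E × E) × (F × F))) (l : ℂ) : Set (F × F) :=
  {p | ∃ f : E, ((f, l • f), p) ∈ Γ}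
def gfield (Γ : Set ((E × E) × (F × F))) (l : ℂ) : Set (F × E) :=
  {p | ∃ h', ((p.2, l • p.2), (p.1, h')) ∈ Γ}

def kreinAdj (Γ : Set ((E × E) × (F × F))) : Set ((F × F) × (E × E)) :=
  {q | ∀ p ∈ Γ, kIP p.1 q.2 = kIP p.2 q.1}

def IsIsomPair (A : Set (E × E)) (Γ : Set ((E × E) × (F × F))) : Prop :=
  IsLinRel Γ ∧ domR Γ ⊆ adjR A ∧ GreenPair Γ
def IsDomDense (A : Set (E × E)) (Γ : Set ((E × E) × (F × F))) : Prop :=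
  closure (domR Γ) = adjR A
def IsABPair (A : Set (E × E)) (Γ : Set ((E × E) × (F × F))) : Prop :=
  IsIsomPair A Γ ∧ IsDomDense A Γ ∧ Dense (ranR (G0 Γ)) ∧ A0 Γ = adjR (A0 Γ)
def IsBPair (A : Set (E × E)) (Γ : Set ((E × E) × (F × F))) : Prop :=
  IsABPair A Γ ∧ ranR (G0 Γ) = Set.univ
def IsUnitaryPair (A : Set (E × E)) (Γ : Set ((E × E) × (F × F))) : Prop :=
  GreenPair Γ ∧ domR Γ ⊆ adjR A ∧ IsDomDense A Γ ∧ invR Γ = kreinAdj Γ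
def IsUnitaryBT (A : Set (E × E)) (Γ : Set ((E × E) × (F × F))) : Prop :=
  IsUnitaryPair A Γ ∧ mulR Γ = {0}
def IsOrdinaryBT (A : Set (E × E)) (Γ : Set ((E × E) × (F × F))) : Prop :=
  IsIsomPair A Γ ∧ mulR Γ = {0} ∧ domR Γ = adjR A ∧ ranR Γ = Set.univ

def Erel (Γ : Set ((E × E) × (F × F))) (m : ℂ) : Set (F × F) :=
  {p | ∃ u' v', (p.1, u') ∈ weyl Γ m ∧ (p.1, v') ∈ weyl Γ ((starRingEnd ℂ) m) ∧
        p.2 = (2 : ℂ)⁻¹ • (u' + v')}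

def triTransform (Γ : Set ((E × E) × (F × F))) (e : Set (F × F)) :
    Set ((E × E) × (F × F)) :=
  {q | ∃ h h' w, (q.1, (h, h')) ∈ Γ ∧ (h, w) ∈ e ∧ q.2 = (h, w + h')}

def formVal (l : ℂ) (u u' : F) : ℝ :=
  ((l - (starRingEnd ℂ) l)⁻¹ * (⟪u, u'⟫ - ⟪u', u⟫)).re

def FormClosable (l : ℂ) (Ms : Set (F × F)) : Prop :=
  ∀ u u' : ℕ → F, (∀ n, (u n, u' n) ∈ Ms) →
    Tendsto u atTop (nhds (0 : F)) →
    Tendsto (fun nm : ℕ × ℕ => formVal l (u nm.1 - u nm.2) (u' nm.1 - u' nm.2)) atTop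
      (nhds (0 : ℝ)) →
    Tendsto (fun n => formVal l (u n) (u' n)) atTop (nhds (0 : ℝ))

def formClosureDom (l : ℂ) (Ms : Set (F × F)) : Set F :=
  {v | ∃ u u' : ℕ → F, (∀ n, (u n, u' n) ∈ Ms) ∧ Tendsto u atTop (nhds v) ∧
    Tendsto (fun nm : ℕ × ℕ => formVal l (u nm.1 - u nm.2) (u' nm.1 - u' nm.2)) atTop
      (nhds (0 : ℝ))}

end InnerDefs

section CompleteDefs
variable {F : Type*} [NormedAddCommGroup F] [InnerProductSpace ℂ F] [CompleteSpace F]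

def IsNevFun (M₀ : ℂ → F →L[ℂ] F) : Prop :=
  DifferentiableOn ℂ M₀ {l : ℂ | l.im ≠ 0} ∧
  (∀ l : ℂ, l.im ≠ 0 → M₀ ((starRingEnd ℂ) l) = ContinuousLinearMap.adjoint (M₀ l)) ∧
  (∀ l : ℂ, 0 < l.im → ∀ u, 0 ≤ (⟪u, M₀ l u⟫).im)

def ImOp (Tb : F →L[ℂ] F) : F →L[ℂ] F :=
  ((2 : ℂ) * Complex.I)⁻¹ • (Tb - ContinuousLinearMap.adjoint Tb)

end CompleteDefs

variable {E F : Type*} [NormedAddCommGroup E] [InnerProductSpace ℂ E] [CompleteSpace E]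
  [NormedAddCommGroup F] [InnerProductSpace ℂ F] [CompleteSpace F]

instance (p : Submodule ℂ F) : CompleteSpace p.topologicalClosure :=
  (Submodule.isClosed_topologicalClosure p).completeSpace_coe

/-- The range of `Im M(l)` for the (bounded, everywhere defined) Weyl function of a
B-generalized boundary pair. -/
def ranIm (Γ : Set ((E × E) × (F × F))) (l : ℂ) : Set F :=
  {w | ∃ u u' v', (u, u') ∈ weyl Γ l ∧ (u, v') ∈ weyl Γ ((starRingEnd ℂ) l) ∧
      w = ((2 : ℂ) * Complex.I)⁻¹ • (u' - v')}

/-- `𝓗_s`, the closure of `ran Im M(l)`. -/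
def HsSub (Γ : Set ((E × E) × (F × F))) (l : ℂ) : Submodule ℂ F :=
  (Submodule.span ℂ (ranIm Γ l)).topologicalClosure

instance (Γ : Set ((E × E) × (F × F))) (l : ℂ) : CompleteSpace (HsSub Γ l) :=
  (Submodule.isClosed_topologicalClosure _).completeSpace_coe

/-! ### Auxiliary development for Statement 9 -/

set_option linter.unusedSectionVars false

section S9Aux

local notation "conj'" => starRingEnd ℂ

namespace IsLinRel

variable {M : Type*} [AddCommGroup M] [Module ℂ M] {s : Set M}

lemma zero_mem (h : IsLinRel s) : (0 : M) ∈ s := by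
  obtain ⟨p, rfl⟩ := h; exact p.zero_mem

lemma add_mem (h : IsLinRel s) {a b : M} (ha : a ∈ s) (hb : b ∈ s) : a + b ∈ s := by
  obtain ⟨p, rfl⟩ := h; exact p.add_mem ha hb

lemma smul_mem (h : IsLinRel s) (c : ℂ) {a : M} (ha : a ∈ s) : c • a ∈ s := by
  obtain ⟨p, rfl⟩ := h; exact p.smul_mem c ha

lemma neg_mem (h : IsLinRel s) {a : M} (ha : a ∈ s) : -a ∈ s := by
  obtain ⟨p, rfl⟩ := h; exact p.neg_mem ha

lemma sub_mem (h : IsLinRel s) {a b : M} (ha : a ∈ s) (hb : b ∈ s) : a - b ∈ s := by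
  obtain ⟨p, rfl⟩ := h; exact p.sub_mem ha hb

end IsLinRel

lemma mem_adjR {S : Set (E × E)} {p : E × E} :
    p ∈ adjR S ↔ ∀ q ∈ S, ⟪p.1, q.2⟫ = ⟪p.2, q.1⟫ := Iff.rfl

lemma adjR_linRel (S : Set (E × E)) : IsLinRel (adjR S) := by
  refine ⟨{ carrier := adjR S, add_mem' := ?_, zero_mem' := ?_, smul_mem' := ?_ }, rfl⟩
  · intro a b ha hb q hq
    have h1 := ha q hq
    have h2 := hb q hq
    simp only [Prod.fst_add, Prod.snd_add, inner_add_left]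
    rw [h1, h2]
  · intro q hq
    simp [inner_zero_left]
  · intro c a ha q hq
    have h1 := ha q hq
    simp only [Prod.smul_fst, Prod.smul_snd, inner_smul_left]
    rw [h1]

lemma adjR_isClosed (S : Set (E × E)) : IsClosed (adjR S) := by
  have : adjR S = ⋂ q ∈ S, {p : E × E | ⟪p.1, q.2⟫ = ⟪p.2, q.1⟫} := by
    ext p
    simp only [Set.mem_iInter, Set.mem_setOf_eq]
    rfl
  rw [this]
  refine isClosed_biInter fun q _ => isClosed_eq ?_ ?_
  · exact Continuous.inner continuous_fst continuous_const
  · exact Continuous.inner continuous_snd continuous_const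

variable {A : Set (E × E)} {Γ : Set ((E × E) × (F × F))} {l m : ℂ}

/-- Bundled hypotheses extracted from `IsBPair`. -/
structure BData (A : Set (E × E)) (Γ : Set ((E × E) × (F × F))) : Prop where
  lin : IsLinRel Γ
  dom : domR Γ ⊆ adjR A
  green : GreenPair Γ
  dcl : closure (domR Γ) = adjR A
  sa : A0 Γ = adjR (A0 Γ)
  ran0 : ranR (G0 Γ) = Set.univ

lemma isBPair_bdata (hB : IsBPair A Γ) : BData A Γ :=
  ⟨hB.1.1.1, hB.1.1.2.1, hB.1.1.2.2, hB.1.2.1, hB.1.2.2.2, hB.2⟩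

lemma mem_A0 {p : E × E} : p ∈ A0 Γ ↔ ∃ b, (p, ((0 : F), b)) ∈ Γ := Iff.rfl

namespace BData

lemma a0lin (h : BData A Γ) : IsLinRel (A0 Γ) := by
  rw [h.sa]; exact adjR_linRel _

lemma a0closed (h : BData A Γ) : IsClosed (A0 Γ) := by
  rw [h.sa]; exact adjR_isClosed _

lemma a0symm (h : BData A Γ) {p q : E × E} (hp : p ∈ A0 Γ) (hq : q ∈ A0 Γ) :
    ⟪p.1, q.2⟫ = ⟪p.2, q.1⟫ := by
  have hp' : p ∈ adjR (A0 Γ) := h.sa ▸ hp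
  exact hp' q hq

lemma mul0 (h : BData A Γ) {b : F} (hb : (((0 : E), (0 : E)), ((0 : F), b)) ∈ Γ) :
    b = 0 := by
  have hbmem : b ∈ ranR (G0 Γ) := h.ran0 ▸ Set.mem_univ b
  obtain ⟨p, hp⟩ := hbmem
  obtain ⟨h', hh⟩ := hp
  have hgr := h.green _ hb _ hh
  simp only [inner_zero_right, inner_zero_left, sub_zero, zero_sub, sub_self] at hgr
  exact inner_self_eq_zero.mp hgr.symm

lemma res_bound (h : BData A Γ) {g g' : E} (hg : (g, g') ∈ A0 Γ) (l : ℂ) :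
    |l.im| * ‖g‖ ≤ ‖g' - l • g‖ := by
  have hsymm : ⟪g, g'⟫ = ⟪g', g⟫ := h.a0symm hg hg
  have hreal : (⟪g', g⟫ : ℂ).im = 0 := by
    have h1 : conj' ⟪g', g⟫ = ⟪g', g⟫ := by rw [inner_conj_symm]; exact hsymm
    exact Complex.conj_eq_iff_im.mp h1
  set t := (⟪g', g⟫ : ℂ).re with ht
  have e1 : ‖g' - l • g‖ ^ 2 = ‖g'‖ ^ 2 - 2 * (l.re * t) + (l.re ^ 2 + l.im ^ 2) * ‖g‖ ^ 2 := by
    rw [@norm_sub_sq ℂ]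
    have h2 : RCLike.re ⟪g', l • g⟫ = l.re * t := by
      rw [inner_smul_right]
      simp only [RCLike.mul_re]
      simp only [RCLike.re_to_complex, RCLike.im_to_complex] at *
      rw [hreal]; ring
    have h3 : ‖l • g‖ ^ 2 = (l.re ^ 2 + l.im ^ 2) * ‖g‖ ^ 2 := by
      rw [norm_smul]
      have : ‖l‖ ^ 2 = l.re ^ 2 + l.im ^ 2 := by
        rw [Complex.sq_norm, Complex.normSq_apply]; ring
      rw [mul_pow, this]
    rw [h2, h3]
  have e2 : (0 : ℝ) ≤ ‖g' - (l.re : ℂ) • g‖ ^ 2 := sq_nonneg _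
  have e3 : ‖g' - (l.re : ℂ) • g‖ ^ 2 = ‖g'‖ ^ 2 - 2 * (l.re * t) + l.re ^ 2 * ‖g‖ ^ 2 := by
    rw [@norm_sub_sq ℂ]
    have h2 : RCLike.re ⟪g', (l.re : ℂ) • g⟫ = l.re * t := by
      rw [inner_smul_right]
      simp only [RCLike.mul_re]
      simp only [RCLike.re_to_complex, RCLike.im_to_complex] at *
      rw [hreal]
      simp
      exact Or.inl ht.symm
    have h3 : ‖(l.re : ℂ) • g‖ ^ 2 = l.re ^ 2 * ‖g‖ ^ 2 := by
      rw [norm_smul, mul_pow]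
      congr 1
      simp [Complex.norm_real, sq_abs]
    rw [h2, h3]
  have key : l.im ^ 2 * ‖g‖ ^ 2 ≤ ‖g' - l • g‖ ^ 2 := by nlinarith [e1, e2, e3]
  nlinarith [key, norm_nonneg (g' - l • g), norm_nonneg g, abs_nonneg l.im, sq_abs l.im,
    mul_nonneg (abs_nonneg l.im) (norm_nonneg g)]

lemma sub_conj_ne (hl : l.im ≠ 0) : l - conj' l ≠ 0 := by
  rw [Complex.sub_conj]
  simp only [ne_eq, mul_eq_zero, Complex.I_ne_zero, or_false]
  exact_mod_cast by
    simp only [Complex.ofReal_mul, Complex.ofReal_ofNat, mul_eq_zero, Complex.ofReal_eq_zero]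
    push_neg
    exact ⟨two_ne_zero, hl⟩

lemma res_exists (h : BData A Γ) (hl : l.im ≠ 0) (y : E) :
    ∃ p : E × E, p ∈ A0 Γ ∧ p.2 - l • p.1 = y := by
  classical
  obtain ⟨A0s, hA0s⟩ := h.a0lin
  set φ : (E × E) →ₗ[ℂ] E := LinearMap.snd ℂ E E - l • LinearMap.fst ℂ E E with hφ
  have hφap : ∀ p : E × E, φ p = p.2 - l • p.1 := fun p => rfl
  set D := Submodule.map φ A0s with hD
  have hDmem : ∀ x : E, x ∈ D ↔ ∃ p ∈ A0 Γ, p.2 - l • p.1 = x := by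
    intro x
    constructor
    · rintro ⟨p, hp, rfl⟩
      exact ⟨p, hA0s ▸ hp, (hφap p).symm ▸ rfl⟩
    · rintro ⟨p, hp, hx⟩
      refine ⟨p, ?_, by rw [hφap]; exact hx⟩
      show p ∈ (A0s : Set (E × E)); rw [hA0s]; exact hp
  have hclosed : IsClosed (D : Set E) := by
    apply IsSeqClosed.isClosed
    intro x x₀ hx hlim
    choose p hp hpx using fun n => (hDmem (x n)).1 (hx n)
    have hdiff : ∀ a b : ℕ, (p a - p b).2 - l • (p a - p b).1 = x a - x b := by
      intro a b
      simp only [Prod.snd_sub, Prod.fst_sub, smul_sub]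
      rw [← hpx a, ← hpx b]; abel
    have cauch : CauchySeq (fun n => (p n).1) := by
      have hc : CauchySeq x := hlim.cauchySeq
      rw [Metric.cauchySeq_iff] at hc ⊢
      intro ε hε
      obtain ⟨N, hN⟩ := hc (|l.im| * ε) (by positivity)
      refine ⟨N, fun a ha b hb => ?_⟩
      have hdm : p a - p b ∈ A0 Γ := h.a0lin.sub_mem (hp a) (hp b)
      have hbound := h.res_bound hdm l
      have hxx : (p a).2 - (p b).2 - l • ((p a).1 - (p b).1) = x a - x b := by
        rw [smul_sub, ← hpx a, ← hpx b]; abel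
      have h2 : |l.im| * ‖(p a).1 - (p b).1‖ < |l.im| * ε := by
        calc |l.im| * ‖(p a).1 - (p b).1‖
            ≤ ‖(p a).2 - (p b).2 - l • ((p a).1 - (p b).1)‖ := hbound
          _ = ‖x a - x b‖ := by rw [hxx]
          _ < |l.im| * ε := by rw [← dist_eq_norm]; exact hN a ha b hb
      rw [dist_eq_norm]
      exact lt_of_mul_lt_mul_left h2 (abs_nonneg l.im)
    obtain ⟨g, hgl⟩ := cauchySeq_tendsto_of_complete cauch
    have hg'eq : ∀ n, (p n).2 = x n + l • (p n).1 := by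
      intro n
      rw [← hpx n]; abel
    have hg'l : Tendsto (fun n => (p n).2) atTop (𝓝 (x₀ + l • g)) := by
      rw [funext hg'eq]
      exact hlim.add (hgl.const_smul l)
    have hmem : (g, x₀ + l • g) ∈ A0 Γ := by
      have hten : Tendsto (fun n => p n) atTop (𝓝 (g, x₀ + l • g)) := by
        rw [nhds_prod_eq]
        exact hgl.prodMk hg'l
      have hpm : ∀ n, p n ∈ A0 Γ := hp
      exact h.a0closed.mem_of_tendsto hten (Filter.Eventually.of_forall hpm)
    refine (hDmem x₀).2 ⟨(g, x₀ + l • g), hmem, ?_⟩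
    simp
  have hdense : Dᗮ = ⊥ := by
    rw [Submodule.eq_bot_iff]
    intro y hy
    have hy' : ∀ p ∈ A0 Γ, ⟪p.2 - l • p.1, y⟫ = 0 := fun p hp =>
      (Submodule.mem_orthogonal _ y).1 hy _ ((hDmem _).2 ⟨p, hp, rfl⟩)
    have hmem : (y, conj' l • y) ∈ A0 Γ := by
      rw [h.sa]
      intro q hq
      have hq' := hy' q hq
      rw [inner_sub_left, inner_smul_left, sub_eq_zero] at hq'
      show ⟪y, q.2⟫ = ⟪conj' l • y, q.1⟫
      rw [inner_smul_left, starRingEnd_self_apply]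
      calc ⟪y, q.2⟫ = conj' ⟪q.2, y⟫ := (inner_conj_symm _ _).symm
        _ = conj' (conj' l * ⟪q.1, y⟫) := by rw [hq']
        _ = l * ⟪y, q.1⟫ := by rw [map_mul, starRingEnd_self_apply, inner_conj_symm]
    have hself := h.a0symm hmem hmem
    simp only at hself
    rw [inner_smul_right, inner_smul_left, starRingEnd_self_apply] at hself
    have h0 : (conj' l - l) * ⟪y, y⟫ = 0 := by linear_combination hself
    rcases mul_eq_zero.1 h0 with h1 | h2
    · exfalso
      apply sub_conj_ne hl
      have : conj' l - l = -(l - conj' l) := by ring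
      rw [this] at h1
      exact neg_eq_zero.mp h1
    · exact inner_self_eq_zero.1 h2
  have htop : D.topologicalClosure = ⊤ := Submodule.topologicalClosure_eq_top_iff.2 hdense
  have hyD : y ∈ D := by
    have h1 : y ∈ (D.topologicalClosure : Set E) := by rw [htop]; trivial
    rwa [Submodule.topologicalClosure_coe, hclosed.closure_eq] at h1
  obtain ⟨p, hp, hpx⟩ := (hDmem y).1 hyD
  exact ⟨p, hp, hpx⟩

lemma total (h : BData A Γ) (hl : l.im ≠ 0) (u : F) :
    ∃ p : E × F, ((p.1, l • p.1), (u, p.2)) ∈ Γ := by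
  have hu : u ∈ ranR (G0 Γ) := h.ran0 ▸ Set.mem_univ u
  obtain ⟨q, hq⟩ := hu
  obtain ⟨k', hk⟩ := hq
  obtain ⟨gp, hgp, hgeq⟩ := h.res_exists hl (q.2 - l • q.1)
  obtain ⟨b, hb⟩ := hgp
  refine ⟨(q.1 - gp.1, k' - b), ?_⟩
  have hsub := h.lin.sub_mem hk hb
  have h2 : q.2 - gp.2 = l • (q.1 - gp.1) := by
    have hg2 : gp.2 = q.2 - l • q.1 + l • gp.1 := by rw [← hgeq]; abel
    rw [hg2, smul_sub]; abel
  have heq : ((q.1, q.2), (u, k')) - ((gp.1, gp.2), ((0 : F), b))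
      = ((q.1 - gp.1, l • (q.1 - gp.1)), (u, k' - b)) := by
    simp only [Prod.mk_sub_mk, sub_zero, h2]
  rw [show (q, (u, k')) = ((q.1, q.2), (u, k')) from rfl,
    show (gp, ((0 : F), b)) = ((gp.1, gp.2), ((0 : F), b)) from rfl, heq] at hsub
  exact hsub

lemma sv (h : BData A Γ) (hl : l.im ≠ 0) {f g : E} {u b c : F}
    (hf : ((f, l • f), (u, b)) ∈ Γ) (hg : ((g, l • g), (u, c)) ∈ Γ) : f = g ∧ b = c := by
  have hd := h.lin.sub_mem hf hg
  have heq : ((f, l • f), (u, b)) - ((g, l • g), (u, c))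
      = ((f - g, l • (f - g)), ((0 : F), b - c)) := by
    simp only [Prod.mk_sub_mk, smul_sub, sub_self]
  rw [heq] at hd
  have hgr := h.green _ hd _ hd
  simp only [inner_zero_left, inner_zero_right, sub_zero, zero_sub, sub_self] at hgr
  rw [inner_smul_right, inner_smul_left, ← sub_mul] at hgr
  have hfg : f - g = 0 := by
    rcases mul_eq_zero.1 hgr with h1 | h2
    · exact absurd h1 (sub_conj_ne hl)
    · exact inner_self_eq_zero.1 h2
  have hd0 : (((0 : E), (0 : E)), ((0 : F), b - c)) ∈ Γ := by
    rw [hfg, smul_zero] at hd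
    exact hd
  have hbc := h.mul0 hd0
  exact ⟨sub_eq_zero.1 hfg, sub_eq_zero.1 hbc⟩

/-- Choice of the `γ`-field/Weyl-function value. -/
noncomputable def gm (h : BData A Γ) (hl : l.im ≠ 0) (u : F) : E × F :=
  (h.total hl u).choose

lemma gm_mem (h : BData A Γ) (hl : l.im ≠ 0) (u : F) :
    (((h.gm hl u).1, l • (h.gm hl u).1), (u, (h.gm hl u).2)) ∈ Γ :=
  (h.total hl u).choose_spec

lemma gm_eq (h : BData A Γ) (hl : l.im ≠ 0) {f : E} {u b : F}
    (hf : ((f, l • f), (u, b)) ∈ Γ) : h.gm hl u = (f, b) := by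
  have := h.sv hl (h.gm_mem hl u) hf
  exact Prod.ext this.1 this.2

lemma gm_add (h : BData A Γ) (hl : l.im ≠ 0) (u v : F) :
    h.gm hl (u + v) = h.gm hl u + h.gm hl v := by
  have h1 := h.gm_mem hl u
  have h2 := h.gm_mem hl v
  have h3 := h.lin.add_mem h1 h2
  have heq : (((h.gm hl u).1, l • (h.gm hl u).1), (u, (h.gm hl u).2))
      + (((h.gm hl v).1, l • (h.gm hl v).1), (v, (h.gm hl v).2))
      = ((((h.gm hl u).1 + (h.gm hl v).1), l • ((h.gm hl u).1 + (h.gm hl v).1)),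
        (u + v, (h.gm hl u).2 + (h.gm hl v).2)) := by
    simp only [Prod.mk_add_mk, smul_add]
  rw [heq] at h3
  exact h.gm_eq hl h3

lemma gm_smul (h : BData A Γ) (hl : l.im ≠ 0) (c : ℂ) (u : F) :
    h.gm hl (c • u) = c • h.gm hl u := by
  have h1 := h.gm_mem hl u
  have h3 := h.lin.smul_mem c h1
  have heq : c • (((h.gm hl u).1, l • (h.gm hl u).1), (u, (h.gm hl u).2))
      = ((c • (h.gm hl u).1, l • (c • (h.gm hl u).1)), (c • u, c • (h.gm hl u).2)) := by
    simp only [Prod.smul_mk, smul_comm l c]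
  rw [heq] at h3
  exact h.gm_eq hl h3

lemma inner_id (h : BData A Γ) (hl : l.im ≠ 0) (hm : m.im ≠ 0) (u v : F) :
    ⟪v, (h.gm hl u).2⟫ - ⟪(h.gm hm v).2, u⟫
      = (l - conj' m) * ⟪(h.gm hm v).1, (h.gm hl u).1⟫ := by
  have hgr := h.green _ (h.gm_mem hl u) _ (h.gm_mem hm v)
  simp only at hgr
  rw [inner_smul_right, inner_smul_left] at hgr
  linear_combination -hgr

end BData


namespace BData

lemma conj_im_ne (h : BData A Γ) (hl : l.im ≠ 0) : ((conj' l).im ≠ 0) := by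
  simp only [Complex.conj_im, ne_eq, neg_eq_zero]
  exact hl

noncomputable def Mlin (h : BData A Γ) (hl : l.im ≠ 0) : F →ₗ[ℂ] F where
  toFun u := (h.gm hl u).2
  map_add' u v := by
    show (h.gm hl (u + v)).2 = (h.gm hl u).2 + (h.gm hl v).2
    rw [h.gm_add hl]; rfl
  map_smul' c u := by
    show (h.gm hl (c • u)).2 = c • (h.gm hl u).2
    rw [h.gm_smul hl]; rfl

lemma inner_id' (h : BData A Γ) (hl : l.im ≠ 0) (u v : F) :
    ⟪v, (h.gm hl u).2⟫ = ⟪(h.gm (h.conj_im_ne hl) v).2, u⟫ := by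
  have hid := h.inner_id hl (h.conj_im_ne hl) u v
  rw [starRingEnd_self_apply, sub_self, zero_mul] at hid
  exact sub_eq_zero.mp hid

lemma Mlin_cont (h : BData A Γ) (hl : l.im ≠ 0) : Continuous (h.Mlin hl) := by
  apply LinearMap.continuous_of_isClosed_graph
  apply IsSeqClosed.isClosed
  rintro q q₀ hq hlim
  have h1 : Tendsto (fun n => (q n).1) atTop (𝓝 q₀.1) :=
    (continuous_fst.tendsto q₀).comp hlim
  have h2 : Tendsto (fun n => (q n).2) atTop (𝓝 q₀.2) :=
    (continuous_snd.tendsto q₀).comp hlim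
  rw [SetLike.mem_coe, LinearMap.mem_graph_iff]
  have hqg : ∀ n, (q n).2 = (h.gm hl (q n).1).2 := by
    intro n
    have hn := hq n
    rw [SetLike.mem_coe, LinearMap.mem_graph_iff] at hn
    exact hn
  apply ext_inner_left ℂ
  intro v
  have t1 : Tendsto (fun n => ⟪v, (q n).2⟫) atTop (𝓝 ⟪v, q₀.2⟫) :=
    Tendsto.inner tendsto_const_nhds h2
  have t2 : Tendsto (fun n => ⟪(h.gm (h.conj_im_ne hl) v).2, (q n).1⟫) atTop
      (𝓝 ⟪(h.gm (h.conj_im_ne hl) v).2, q₀.1⟫) :=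
    Tendsto.inner tendsto_const_nhds h1
  have heqn : (fun n => ⟪v, (q n).2⟫)
      = fun n => ⟪(h.gm (h.conj_im_ne hl) v).2, (q n).1⟫ :=
    funext fun n => by rw [hqg n, h.inner_id' hl]
  rw [heqn] at t1
  have huniq := tendsto_nhds_unique t1 t2
  calc ⟪v, q₀.2⟫ = ⟪(h.gm (h.conj_im_ne hl) v).2, q₀.1⟫ := huniq
    _ = ⟪v, (h.gm hl q₀.1).2⟫ := (h.inner_id' hl q₀.1 v).symm

noncomputable def Mop (h : BData A Γ) (hl : l.im ≠ 0) : F →L[ℂ] F :=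
  ⟨h.Mlin hl, h.Mlin_cont hl⟩

lemma Mop_apply (h : BData A Γ) (hl : l.im ≠ 0) (u : F) :
    h.Mop hl u = (h.gm hl u).2 := rfl

lemma Mop_adjoint (h : BData A Γ) (hl : l.im ≠ 0) :
    h.Mop (h.conj_im_ne hl) = ContinuousLinearMap.adjoint (h.Mop hl) := by
  rw [ContinuousLinearMap.eq_adjoint_iff]
  intro x y
  rw [Mop_apply, Mop_apply]
  exact (h.inner_id' hl y x).symm

lemma im_inner_gm (h : BData A Γ) (hl : l.im ≠ 0) (u v : F) :
    ⟪v, h.Mop hl u⟫ - ⟪h.Mop hl v, u⟫ = (l - conj' l) * ⟪(h.gm hl v).1, (h.gm hl u).1⟫ :=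
  h.inner_id hl hl u v

lemma gnorm_sq (h : BData A Γ) (hl : l.im ≠ 0) (u : F) :
    (⟪u, (h.gm hl u).2⟫).im = l.im * ‖(h.gm hl u).1‖ ^ 2 := by
  have hid := h.inner_id hl hl u u
  have hnorm : ⟪(h.gm hl u).1, (h.gm hl u).1⟫ = ((‖(h.gm hl u).1‖ ^ 2 : ℝ) : ℂ) := by
    rw [inner_self_eq_norm_sq_to_K]
    norm_cast
  rw [hnorm] at hid
  have hconj : ⟪(h.gm hl u).2, u⟫ = conj' ⟪u, (h.gm hl u).2⟫ := (inner_conj_symm _ _).symm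
  rw [hconj, Complex.sub_conj, Complex.sub_conj] at hid
  have h2 := congrArg Complex.im hid
  simp only [Complex.mul_im, Complex.ofReal_re, Complex.ofReal_im, Complex.I_re, Complex.I_im,
    Complex.mul_re, mul_zero, zero_mul, mul_one, sub_zero, add_zero, zero_add, zero_sub,
    neg_zero] at h2
  linarith

lemma glin_sq_bound (h : BData A Γ) (hl : l.im ≠ 0) (u : F) :
    |l.im| * ‖(h.gm hl u).1‖ ^ 2 ≤ ‖h.Mop hl‖ * ‖u‖ ^ 2 := by
  have h2 := h.gnorm_sq hl u
  have h3 : |(⟪u, (h.gm hl u).2⟫ : ℂ).im| ≤ ‖h.Mop hl‖ * ‖u‖ ^ 2 := by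
    calc |(⟪u, (h.gm hl u).2⟫ : ℂ).im| ≤ ‖⟪u, (h.gm hl u).2⟫‖ :=
          Complex.abs_im_le_norm _
      _ = ‖⟪u, (h.gm hl u).2⟫‖ := rfl
      _ ≤ ‖u‖ * ‖(h.gm hl u).2‖ := norm_inner_le_norm _ _
      _ = ‖u‖ * ‖h.Mop hl u‖ := rfl
      _ ≤ ‖u‖ * (‖h.Mop hl‖ * ‖u‖) := by
          gcongr
          exact (h.Mop hl).le_opNorm u
      _ = ‖h.Mop hl‖ * ‖u‖ ^ 2 := by ring
  calc |l.im| * ‖(h.gm hl u).1‖ ^ 2 = |l.im * ‖(h.gm hl u).1‖ ^ 2| := by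
        rw [abs_mul, abs_of_nonneg (by positivity : (0:ℝ) ≤ ‖(h.gm hl u).1‖ ^ 2)]
    _ = |(⟪u, (h.gm hl u).2⟫ : ℂ).im| := by rw [← h2]
    _ ≤ ‖h.Mop hl‖ * ‖u‖ ^ 2 := h3

lemma glin_bound (h : BData A Γ) (hl : l.im ≠ 0) (u : F) :
    ‖(h.gm hl u).1‖ ≤ Real.sqrt (‖h.Mop hl‖ / |l.im|) * ‖u‖ := by
  have him : (0:ℝ) < |l.im| := abs_pos.mpr hl
  have hC2 : (Real.sqrt (‖h.Mop hl‖ / |l.im|)) ^ 2 = ‖h.Mop hl‖ / |l.im| :=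
    Real.sq_sqrt (by positivity)
  have hsq : ‖(h.gm hl u).1‖ ^ 2 ≤ (Real.sqrt (‖h.Mop hl‖ / |l.im|) * ‖u‖) ^ 2 := by
    have hCU : (Real.sqrt (‖h.Mop hl‖ / |l.im|) * ‖u‖) ^ 2
        = (‖h.Mop hl‖ / |l.im|) * ‖u‖ ^ 2 := by rw [mul_pow, hC2]
    rw [hCU, div_mul_eq_mul_div, le_div_iff₀ him]
    have := h.glin_sq_bound hl u
    nlinarith
  calc ‖(h.gm hl u).1‖ = Real.sqrt (‖(h.gm hl u).1‖ ^ 2) :=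
        (Real.sqrt_sq (norm_nonneg _)).symm
    _ ≤ Real.sqrt ((Real.sqrt (‖h.Mop hl‖ / |l.im|) * ‖u‖) ^ 2) := Real.sqrt_le_sqrt hsq
    _ = Real.sqrt (‖h.Mop hl‖ / |l.im|) * ‖u‖ := Real.sqrt_sq (by positivity)

noncomputable def glin (h : BData A Γ) (hl : l.im ≠ 0) : F →ₗ[ℂ] E where
  toFun u := (h.gm hl u).1
  map_add' u v := by
    show (h.gm hl (u + v)).1 = (h.gm hl u).1 + (h.gm hl v).1
    rw [h.gm_add hl]; rfl
  map_smul' c u := by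
    show (h.gm hl (c • u)).1 = c • (h.gm hl u).1
    rw [h.gm_smul hl]; rfl

noncomputable def gop (h : BData A Γ) (hl : l.im ≠ 0) : F →L[ℂ] E :=
  LinearMap.mkContinuous (h.glin hl) (Real.sqrt (‖h.Mop hl‖ / |l.im|)) (h.glin_bound hl)

lemma gop_apply (h : BData A Γ) (hl : l.im ≠ 0) (u : F) :
    h.gop hl u = (h.gm hl u).1 := rfl

lemma gop_Mop_mem (h : BData A Γ) (hl : l.im ≠ 0) (u : F) :
    ((h.gop hl u, l • h.gop hl u), (u, h.Mop hl u)) ∈ Γ := h.gm_mem hl u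

lemma imOp_inner (h : BData A Γ) (hl : l.im ≠ 0) (u v : F) :
    ⟪v, ImOp (h.Mop hl) u⟫ = (l.im : ℂ) * ⟪h.gop hl v, h.gop hl u⟫ := by
  have hid := h.im_inner_gm hl u v
  have hadj : ⟪v, (ContinuousLinearMap.adjoint (h.Mop hl)) u⟫ = ⟪h.Mop hl v, u⟫ :=
    ContinuousLinearMap.adjoint_inner_right _ _ _
  simp only [ImOp, ContinuousLinearMap.smul_apply, ContinuousLinearMap.sub_apply,
    inner_smul_right, inner_sub_right]
  rw [hadj, hid, Complex.sub_conj]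
  have hsc : ((2:ℂ) * Complex.I)⁻¹ * (((2 * l.im : ℝ) : ℂ) * Complex.I) = (l.im : ℂ) := by
    have h2 : ((2:ℂ) * Complex.I) ≠ 0 := by
      simp [Complex.I_ne_zero]
    field_simp
    push_cast
    ring
  rw [← mul_assoc, hsc]
  rfl

lemma gop_ker (h : BData A Γ) (hl : l.im ≠ 0) (hm : m.im ≠ 0) (u : F)
    (hz : h.gop hl u = 0) : h.gop hm u = 0 := by
  have h1 := h.gm_mem hl u
  have h2 := h.gm_mem hm u
  have hd := h.lin.sub_mem h1 h2
  have heq : (((h.gm hl u).1, l • (h.gm hl u).1), (u, (h.gm hl u).2))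
      - (((h.gm hm u).1, m • (h.gm hm u).1), (u, (h.gm hm u).2))
      = (((h.gm hl u).1 - (h.gm hm u).1, l • (h.gm hl u).1 - m • (h.gm hm u).1),
        ((0:F), (h.gm hl u).2 - (h.gm hm u).2)) := by
    simp only [Prod.mk_sub_mk, sub_self]
  rw [heq] at hd
  have hA0 : ((h.gm hl u).1 - (h.gm hm u).1, l • (h.gm hl u).1 - m • (h.gm hm u).1) ∈ A0 Γ :=
    ⟨_, hd⟩
  have hz' : (h.gm hl u).1 = 0 := hz
  rw [hz', smul_zero, zero_sub, zero_sub] at hA0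
  have hneg : ((h.gm hm u).1, m • (h.gm hm u).1) ∈ A0 Γ := by
    have := h.a0lin.neg_mem hA0
    simpa using this
  have hself := h.a0symm hneg hneg
  simp only at hself
  rw [inner_smul_right, inner_smul_left] at hself
  have h0 : (m - conj' m) * ⟪(h.gm hm u).1, (h.gm hm u).1⟫ = 0 := by linear_combination hself
  rcases mul_eq_zero.1 h0 with hc | hc
  · exact absurd hc (sub_conj_ne hm)
  · exact hc |> inner_self_eq_zero.1

lemma weyl_eq_graph (h : BData A Γ) (hl : l.im ≠ 0) {u u' : F} :
    (u, u') ∈ weyl Γ l ↔ u' = h.Mop hl u := by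
  constructor
  · rintro ⟨f, hf⟩
    exact (h.sv hl hf (h.gm_mem hl u)).2
  · rintro rfl
    exact ⟨_, h.gm_mem hl u⟩

lemma ranIm_eq (h : BData A Γ) (hl : l.im ≠ 0) :
    ranIm Γ l = Set.range (ImOp (h.Mop hl)) := by
  have hl' := h.conj_im_ne hl
  ext w
  constructor
  · rintro ⟨u, u', v', h1, h2, rfl⟩
    refine ⟨u, ?_⟩
    have e1 : u' = h.Mop hl u := (h.weyl_eq_graph hl).1 h1
    have e2 : v' = h.Mop hl' u := (h.weyl_eq_graph hl').1 h2
    simp only [ImOp, ContinuousLinearMap.smul_apply, ContinuousLinearMap.sub_apply]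
    rw [← h.Mop_adjoint hl, e1, e2]
  · rintro ⟨u, rfl⟩
    refine ⟨u, h.Mop hl u, h.Mop hl' u, (h.weyl_eq_graph hl).2 rfl,
      (h.weyl_eq_graph hl').2 rfl, ?_⟩
    simp only [ImOp, ContinuousLinearMap.smul_apply, ContinuousLinearMap.sub_apply]
    rw [← h.Mop_adjoint hl]

lemma hssub_eq (h : BData A Γ) (hl : l.im ≠ 0) :
    HsSub Γ l = (LinearMap.ker (h.gop hl : F →ₗ[ℂ] E))ᗮ := by
  have himC : (l.im : ℂ) ≠ 0 := by exact_mod_cast hl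
  have horth : (LinearMap.range (ImOp (h.Mop hl) : F →ₗ[ℂ] F))ᗮ = LinearMap.ker (h.gop hl : F →ₗ[ℂ] E) := by
    ext x
    rw [Submodule.mem_orthogonal, LinearMap.mem_ker]
    constructor
    · intro hx
      have h1 : ⟪ImOp (h.Mop hl) x, x⟫ = 0 := hx _ ⟨x, rfl⟩
      have h2 : ⟪x, ImOp (h.Mop hl) x⟫ = 0 := by
        rw [← inner_conj_symm, h1, map_zero]
      rw [h.imOp_inner hl x x] at h2
      rcases mul_eq_zero.1 h2 with hc | hc
      · exact absurd hc himC
      · exact inner_self_eq_zero.1 hc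
    · intro hx u hu
      obtain ⟨z, rfl⟩ := hu
      have hz := h.imOp_inner hl z x
      rw [show h.gop hl x = 0 from hx, inner_zero_left, mul_zero] at hz
      calc ⟪ImOp (h.Mop hl) z, x⟫ = conj' ⟪x, ImOp (h.Mop hl) z⟫ :=
            (inner_conj_symm _ _).symm
        _ = 0 := by rw [hz, map_zero]
  have hspan : Submodule.span ℂ (Set.range (ImOp (h.Mop hl)))
      = LinearMap.range (ImOp (h.Mop hl) : F →ₗ[ℂ] F) := by
    apply le_antisymm
    · rw [Submodule.span_le]
      rintro x ⟨u, rfl⟩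
      exact ⟨u, rfl⟩
    · rintro x ⟨u, rfl⟩
      exact Submodule.subset_span ⟨u, rfl⟩
  rw [HsSub, h.ranIm_eq hl, hspan, ← Submodule.orthogonal_orthogonal_eq_closure, horth]

lemma hs_indep (h : BData A Γ) (hl : l.im ≠ 0) (hm : m.im ≠ 0) :
    HsSub Γ l = HsSub Γ m := by
  rw [h.hssub_eq hl, h.hssub_eq hm]
  congr 1
  ext x
  simp only [LinearMap.mem_ker]
  exact ⟨fun hx => h.gop_ker hl hm x hx, fun hx => h.gop_ker hm hl x hx⟩

end BData


lemma I_im_ne : (Complex.I).im ≠ 0 := by simp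

namespace BData

/-- `Im M(i)`. -/
noncomputable def Rim (h : BData A Γ) : F →L[ℂ] F := ImOp (h.Mop I_im_ne)

lemma Rim_inner (h : BData A Γ) (u v : F) :
    ⟪v, h.Rim u⟫ = ⟪h.gop I_im_ne v, h.gop I_im_ne u⟫ := by
  have hid := h.imOp_inner I_im_ne u v
  rwa [Complex.I_im, Complex.ofReal_one, one_mul] at hid

lemma Rim_sa (h : BData A Γ) : IsSelfAdjoint h.Rim := by
  rw [ContinuousLinearMap.isSelfAdjoint_iff']
  rw [eq_comm, ContinuousLinearMap.eq_adjoint_iff]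
  intro x y
  calc ⟪h.Rim x, y⟫ = conj' ⟪y, h.Rim x⟫ := (inner_conj_symm _ _).symm
    _ = conj' ⟪h.gop I_im_ne y, h.gop I_im_ne x⟫ := by rw [h.Rim_inner x y]
    _ = ⟪h.gop I_im_ne x, h.gop I_im_ne y⟫ := inner_conj_symm _ _
    _ = ⟪x, h.Rim y⟫ := (h.Rim_inner y x).symm

lemma Rim_nonneg (h : BData A Γ) : 0 ≤ h.Rim := by
  rw [ContinuousLinearMap.nonneg_iff_isPositive]
  refine ⟨ContinuousLinearMap.isSelfAdjoint_iff_isSymmetric.mp h.Rim_sa, fun x => ?_⟩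
  show 0 ≤ RCLike.re ⟪h.Rim x, x⟫
  have h1 : ⟪h.Rim x, x⟫ = conj' ⟪x, h.Rim x⟫ := (inner_conj_symm _ _).symm
  rw [h1, h.Rim_inner x x]
  have := inner_self_nonneg (𝕜 := ℂ) (x := h.gop I_im_ne x)
  simpa using this

set_option synthInstance.maxHeartbeats 1000000 in
/-- `Q = (Im M(i))^{1/2}`. -/
noncomputable def Qop (h : BData A Γ) : F →L[ℂ] F := CFC.sqrt h.Rim

set_option synthInstance.maxHeartbeats 1000000 in
lemma Qop_mul (h : BData A Γ) : h.Qop * h.Qop = h.Rim := by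
  have := CFC.sq_sqrt h.Rim h.Rim_nonneg
  rwa [sq] at this

set_option synthInstance.maxHeartbeats 1000000 in
lemma Qop_sa (h : BData A Γ) : IsSelfAdjoint h.Qop :=
  ((ContinuousLinearMap.nonneg_iff_isPositive _).mp (CFC.sqrt_nonneg h.Rim)).isSelfAdjoint

lemma Qop_inner (h : BData A Γ) (u v : F) :
    ⟪h.Qop u, h.Qop v⟫ = ⟪h.gop I_im_ne u, h.gop I_im_ne v⟫ := by
  have h1 : ⟪h.Qop u, h.Qop v⟫ = ⟪u, h.Rim v⟫ := by
    calc ⟪h.Qop u, h.Qop v⟫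
        = ⟪u, ContinuousLinearMap.adjoint h.Qop (h.Qop v)⟫ :=
          (ContinuousLinearMap.adjoint_inner_right _ _ _).symm
      _ = ⟪u, h.Rim v⟫ := by
          rw [h.Qop_sa.adjoint_eq,
            show h.Qop (h.Qop v) = (h.Qop * h.Qop) v from rfl, h.Qop_mul]
  rw [h1, h.Rim_inner v u]

lemma Qop_norm (h : BData A Γ) (u : F) : ‖h.Qop u‖ = ‖h.gop I_im_ne u‖ := by
  have h1 := h.Qop_inner u u
  have h2 : (‖h.Qop u‖ ^ 2 : ℝ) = ‖h.gop I_im_ne u‖ ^ 2 := by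
    have hQ : RCLike.re ⟪h.Qop u, h.Qop u⟫ = ‖h.Qop u‖ ^ 2 := by
      rw [← inner_self_eq_norm_sq (𝕜 := ℂ)]
    have hG : RCLike.re ⟪h.gop I_im_ne u, h.gop I_im_ne u⟫ = ‖h.gop I_im_ne u‖ ^ 2 := by
      rw [← inner_self_eq_norm_sq (𝕜 := ℂ)]
    rw [← hQ, ← hG, h1]
  nlinarith [norm_nonneg (h.Qop u), norm_nonneg (h.gop I_im_ne u), h2]

lemma Qop_ker_iff (h : BData A Γ) (u : F) : h.Qop u = 0 ↔ h.gop I_im_ne u = 0 := by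
  constructor <;> intro hz
  · have hn := h.Qop_norm u
    rw [hz, norm_zero] at hn
    exact norm_eq_zero.mp hn.symm
  · have hn := h.Qop_norm u
    rw [hz, norm_zero] at hn
    exact norm_eq_zero.mp hn

lemma Qop_mem_Hs (h : BData A Γ) (u : F) : h.Qop u ∈ HsSub Γ Complex.I := by
  rw [h.hssub_eq I_im_ne, Submodule.mem_orthogonal]
  intro y hy
  rw [LinearMap.mem_ker] at hy
  have hQy : h.Qop y = 0 := (h.Qop_ker_iff y).mpr hy
  calc ⟪y, h.Qop u⟫ = ⟪ContinuousLinearMap.adjoint h.Qop y, u⟫ :=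
        (ContinuousLinearMap.adjoint_inner_left _ _ _).symm
    _ = ⟪h.Qop y, u⟫ := by rw [h.Qop_sa.adjoint_eq]
    _ = 0 := by rw [hQy, inner_zero_left]

/-- `G`, the square root corestricted to `𝓗_s`. -/
noncomputable def Qt (h : BData A Γ) : F →L[ℂ] (HsSub Γ Complex.I) :=
  (h.Qop).codRestrict _ h.Qop_mem_Hs

lemma Qt_coe (h : BData A Γ) (u : F) : ((h.Qt u : F)) = h.Qop u := rfl

lemma Qt_denseRange (h : BData A Γ) : DenseRange h.Qt := by
  have hbot : (LinearMap.range (h.Qt : F →ₗ[ℂ] HsSub Γ Complex.I))ᗮ = ⊥ := by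
    rw [Submodule.eq_bot_iff]
    intro w hw
    have hw' : ∀ u : F, ⟪h.Qt u, w⟫ = 0 := fun u =>
      (Submodule.mem_orthogonal _ w).1 hw _ ⟨u, rfl⟩
    have hQw : h.Qop (w : F) = 0 := by
      apply ext_inner_left ℂ
      intro u
      have h1 := hw' u
      rw [Submodule.coe_inner] at h1
      rw [inner_zero_right]
      calc ⟪u, h.Qop (w : F)⟫
          = ⟪u, ContinuousLinearMap.adjoint h.Qop (w : F)⟫ := by rw [h.Qop_sa.adjoint_eq]
        _ = ⟪h.Qop u, (w : F)⟫ := ContinuousLinearMap.adjoint_inner_right _ _ _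
        _ = 0 := h1
    have hker : (w : F) ∈ LinearMap.ker (h.gop I_im_ne : F →ₗ[ℂ] E) :=
      LinearMap.mem_ker.2 ((h.Qop_ker_iff _).mp hQw)
    have hHs : (w : F) ∈ (LinearMap.ker (h.gop I_im_ne : F →ₗ[ℂ] E))ᗮ := by
      rw [← h.hssub_eq I_im_ne]
      exact w.2
    have h0 : ⟪(w : F), (w : F)⟫ = 0 :=
      (Submodule.mem_orthogonal' _ _).1 hHs _ hker
    exact Subtype.ext (by simpa using inner_self_eq_zero.1 h0)
  have htop : (LinearMap.range (h.Qt : F →ₗ[ℂ] HsSub Γ Complex.I)).topologicalClosure = ⊤ :=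
    Submodule.topologicalClosure_eq_top_iff.2 hbot
  have hcl : closure (Set.range h.Qt) = Set.univ := by
    have h1 : Set.range ⇑h.Qt = ((LinearMap.range (h.Qt : F →ₗ[ℂ] HsSub Γ Complex.I) : Submodule ℂ _) : Set _) := by
      ext x
      simp [LinearMap.mem_range]
    rw [h1, ← Submodule.topologicalClosure_coe, htop, Submodule.top_coe]
  rw [DenseRange, dense_iff_closure_eq, hcl]

/-- The dense subset `ran Q` of `𝓗_s`. -/
def sQ (h : BData A Γ) : Set (HsSub Γ Complex.I) := Set.range h.Qt

lemma sQ_dense (h : BData A Γ) : Dense h.sQ := h.Qt_denseRange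

noncomputable def jfun (h : BData A Γ) : h.sQ → E := fun v => h.gop I_im_ne v.2.choose

lemma jfun_eq (h : BData A Γ) (v : h.sQ) (u : F) (hu : h.Qt u = (v : HsSub Γ Complex.I)) :
    h.jfun v = h.gop I_im_ne u := by
  have hc : h.Qt v.2.choose = (v : HsSub Γ Complex.I) := v.2.choose_spec
  have hQeq : h.Qop v.2.choose = h.Qop u := by
    have := hc.trans hu.symm
    have := congrArg (Subtype.val) this
    simpa [Qt_coe] using this
  have hz : h.Qop (v.2.choose - u) = 0 := by rw [map_sub, hQeq, sub_self]
  have hg : h.gop I_im_ne (v.2.choose - u) = 0 := (h.Qop_ker_iff _).mp hz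
  rw [map_sub, sub_eq_zero] at hg
  exact hg

lemma jfun_isometry (h : BData A Γ) : Isometry h.jfun := by
  apply Isometry.of_dist_eq
  intro a b
  rw [dist_eq_norm, Subtype.dist_eq, dist_eq_norm]
  have ha : h.jfun a = h.gop I_im_ne a.2.choose := rfl
  have hb : h.jfun b = h.gop I_im_ne b.2.choose := rfl
  rw [ha, hb, ← map_sub, ← h.Qop_norm]
  have hQ : h.Qop (a.2.choose - b.2.choose)
      = ((a : HsSub Γ Complex.I) : F) - ((b : HsSub Γ Complex.I) : F) := by
    rw [map_sub, ← h.Qt_coe, ← h.Qt_coe, a.2.choose_spec, b.2.choose_spec]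
  rw [hQ]
  have hcoe : ((a : HsSub Γ Complex.I) : F) - ((b : HsSub Γ Complex.I) : F)
      = (((a : HsSub Γ Complex.I) - (b : HsSub Γ Complex.I) : HsSub Γ Complex.I) : F) := by
    simp
  rw [hcoe, Submodule.coe_norm]

lemma val_denseRange (h : BData A Γ) :
    DenseRange (Subtype.val : h.sQ → HsSub Γ Complex.I) :=
  h.sQ_dense.denseRange_val

/-- The extension `γ̄ : 𝓗_s → 𝔥` of `γ(i) ∘ Q⁻¹`. -/
noncomputable def gbarF (h : BData A Γ) : HsSub Γ Complex.I → E :=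
  (isUniformEmbedding_subtype_val.toIsUniformInducing.isDenseInducing
    h.val_denseRange).extend h.jfun

lemma gbarF_cont (h : BData A Γ) : Continuous h.gbarF :=
  (uniformContinuous_uniformly_extend isUniformEmbedding_subtype_val.toIsUniformInducing
    h.val_denseRange h.jfun_isometry.uniformContinuous).continuous

lemma gbarF_eq (h : BData A Γ) (v : h.sQ) : h.gbarF (v : HsSub Γ Complex.I) = h.jfun v :=
  (isUniformEmbedding_subtype_val.toIsUniformInducing.isDenseInducing
    h.val_denseRange).extend_eq h.jfun_isometry.continuous v

lemma gbarF_Qt (h : BData A Γ) (u : F) : h.gbarF (h.Qt u) = h.gop I_im_ne u := by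
  have hv : h.Qt u ∈ h.sQ := ⟨u, rfl⟩
  have h1 := h.gbarF_eq ⟨h.Qt u, hv⟩
  rw [h1]
  exact h.jfun_eq ⟨h.Qt u, hv⟩ u rfl

lemma gbarF_add (h : BData A Γ) (v w : HsSub Γ Complex.I) :
    h.gbarF (v + w) = h.gbarF v + h.gbarF w := by
  have hfg : (fun p : HsSub Γ Complex.I × HsSub Γ Complex.I => h.gbarF (p.1 + p.2))
      = fun p => h.gbarF p.1 + h.gbarF p.2 := by
    apply Continuous.ext_on ((h.sQ_dense.prod h.sQ_dense))
    · exact h.gbarF_cont.comp continuous_add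
    · exact (h.gbarF_cont.comp continuous_fst).add (h.gbarF_cont.comp continuous_snd)
    · intro p hp
      obtain ⟨a, ha⟩ := hp.1
      obtain ⟨b, hb⟩ := hp.2
      show h.gbarF (p.1 + p.2) = h.gbarF p.1 + h.gbarF p.2
      rw [← ha, ← hb, ← map_add, h.gbarF_Qt, h.gbarF_Qt, h.gbarF_Qt, map_add]
  exact congrFun hfg (v, w)

lemma gbarF_smul (h : BData A Γ) (c : ℂ) (v : HsSub Γ Complex.I) :
    h.gbarF (c • v) = c • h.gbarF v := by
  have hfg : (fun v : HsSub Γ Complex.I => h.gbarF (c • v))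
      = fun v => c • h.gbarF v := by
    apply Continuous.ext_on h.sQ_dense
    · exact h.gbarF_cont.comp (continuous_const_smul c)
    · exact h.gbarF_cont.const_smul c
    · rintro p ⟨a, ha⟩
      show h.gbarF (c • p) = c • h.gbarF p
      rw [← ha, ← map_smul, h.gbarF_Qt, h.gbarF_Qt, map_smul]
  exact congrFun hfg v

lemma gbarF_norm (h : BData A Γ) (v : HsSub Γ Complex.I) : ‖h.gbarF v‖ = ‖v‖ := by
  have hfg : (fun v : HsSub Γ Complex.I => ‖h.gbarF v‖) = fun v => ‖v‖ := by
    apply Continuous.ext_on h.sQ_dense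
    · exact h.gbarF_cont.norm
    · exact continuous_norm
    · rintro p ⟨a, ha⟩
      show ‖h.gbarF p‖ = ‖p‖
      rw [← ha, h.gbarF_Qt]
      have h1 : ‖h.Qt a‖ = ‖h.Qop a‖ := by
        rw [Submodule.coe_norm, h.Qt_coe]
      rw [h1, h.Qop_norm]
  exact congrFun hfg v

/-- `γ̄` as a continuous linear map. -/
noncomputable def gbarL (h : BData A Γ) : HsSub Γ Complex.I →L[ℂ] E :=
  LinearMap.mkContinuous
    { toFun := h.gbarF
      map_add' := h.gbarF_add
      map_smul' := h.gbarF_smul }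
    1 (fun v => by rw [one_mul]; exact le_of_eq (h.gbarF_norm v))

lemma gbarL_apply (h : BData A Γ) (v : HsSub Γ Complex.I) : h.gbarL v = h.gbarF v := rfl

lemma gbarL_Qt (h : BData A Γ) (u : F) : h.gbarL (h.Qt u) = h.gop I_im_ne u :=
  h.gbarF_Qt u

lemma gbar_inner (h : BData A Γ) (v w : HsSub Γ Complex.I) :
    ⟪h.gbarL v, h.gbarL w⟫ = ⟪v, w⟫ := by
  let li : HsSub Γ Complex.I →ₗᵢ[ℂ] E :=
    ⟨{ toFun := h.gbarF
       map_add' := h.gbarF_add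
       map_smul' := h.gbarF_smul }, h.gbarF_norm⟩
  exact li.inner_map_map v w

lemma gbar_adj_gbar (h : BData A Γ) (v : HsSub Γ Complex.I) :
    ContinuousLinearMap.adjoint h.gbarL (h.gbarL v) = v := by
  apply ext_inner_left ℂ
  intro x
  rw [ContinuousLinearMap.adjoint_inner_right]
  exact h.gbar_inner x v

lemma gbar_inj (h : BData A Γ) {v : HsSub Γ Complex.I} (hv : h.gbarL v = 0) : v = 0 := by
  have := h.gbar_adj_gbar v
  rw [hv, map_zero] at this
  exact this.symm

lemma gbar_comp_Qt (h : BData A Γ) :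
    h.gbarL.comp h.Qt = h.gop I_im_ne := by
  ext u
  exact h.gbarL_Qt u

lemma Qt_adj_gbar (h : BData A Γ) (x : E) :
    ContinuousLinearMap.adjoint h.Qt (ContinuousLinearMap.adjoint h.gbarL x)
      = ContinuousLinearMap.adjoint (h.gop I_im_ne) x := by
  have hcomp := congrArg ContinuousLinearMap.adjoint h.gbar_comp_Qt
  rw [ContinuousLinearMap.adjoint_comp] at hcomp
  exact ContinuousLinearMap.ext_iff.1 hcomp x

lemma Qt_adj_Qt (h : BData A Γ) (u : F) :
    ContinuousLinearMap.adjoint h.Qt (h.Qt u) = h.Rim u := by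
  apply ext_inner_left ℂ
  intro v
  rw [ContinuousLinearMap.adjoint_inner_right, Submodule.coe_inner, Qt_coe, Qt_coe,
    h.Qop_inner v u, h.Rim_inner u v]

end BData


namespace BData

lemma gbar_in_NS (h : BData A Γ) (v : HsSub Γ Complex.I) :
    (h.gbarL v, Complex.I • h.gbarL v) ∈ adjR A := by
  have hclosed : IsClosed {v : HsSub Γ Complex.I |
      (h.gbarL v, Complex.I • h.gbarL v) ∈ adjR A} := by
    have hc : Continuous fun v : HsSub Γ Complex.I =>
        ((h.gbarL v, Complex.I • h.gbarL v) : E × E) :=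
      (h.gbarL.continuous).prodMk ((h.gbarL.continuous).const_smul _)
    exact IsClosed.preimage hc (adjR_isClosed A)
  have hsub : h.sQ ⊆ {v | (h.gbarL v, Complex.I • h.gbarL v) ∈ adjR A} := by
    rintro p ⟨a, rfl⟩
    show (h.gbarL (h.Qt a), Complex.I • h.gbarL (h.Qt a)) ∈ adjR A
    rw [h.gbarL_Qt]
    exact h.dom ⟨_, h.gop_Mop_mem I_im_ne a⟩
  have hcl := hclosed.closure_subset_iff.2 hsub
  rw [h.sQ_dense.closure_eq] at hcl
  exact hcl (Set.mem_univ v)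

lemma NS_sub_range (h : BData A Γ) (f : E) (hf : (f, Complex.I • f) ∈ adjR A) :
    ∃ v, h.gbarL v = f := by
  have hcl : (f, Complex.I • f) ∈ closure (domR Γ) := by rw [h.dcl]; exact hf
  obtain ⟨x, hx, hxl⟩ := mem_closure_iff_seq_limit.1 hcl
  choose gp hgp hgpe using fun n => h.res_exists I_im_ne ((x n).2 - Complex.I • (x n).1)
  choose bb hbb using fun n => (mem_A0.1 (hgp n))
  choose yy hyy using hx
  have hmemn : ∀ n, h.gm I_im_ne (yy n).1 = ((x n).1 - (gp n).1, (yy n).2 - bb n) := by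
    intro n
    apply h.gm_eq I_im_ne
    have hd := h.lin.sub_mem (hyy n) (hbb n)
    have h2 : (x n).2 - (gp n).2 = Complex.I • ((x n).1 - (gp n).1) := by
      have hg2 : (gp n).2 = (x n).2 - Complex.I • (x n).1 + Complex.I • (gp n).1 := by
        rw [← hgpe n]; abel
      rw [hg2, smul_sub]; abel
    have e1 : x n - gp n = ((x n).1 - (gp n).1, Complex.I • ((x n).1 - (gp n).1)) :=
      Prod.ext rfl h2
    have e2 : yy n - ((0 : F), bb n) = ((yy n).1, (yy n).2 - bb n) :=
      Prod.ext (sub_zero _) rfl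
    have heq : (x n, yy n) - (gp n, ((0 : F), bb n))
        = (((x n).1 - (gp n).1, Complex.I • ((x n).1 - (gp n).1)),
          ((yy n).1, (yy n).2 - bb n)) := Prod.ext e1 e2
    rw [heq] at hd
    exact hd
  have hp1 : Tendsto (fun n => (x n).1) atTop (𝓝 f) := (continuous_fst.tendsto _).comp hxl
  have hgp0 : Tendsto (fun n => (gp n).1) atTop (𝓝 0) := by
    have hb : ∀ n, ‖(gp n).1‖ ≤ ‖(x n).2 - Complex.I • (x n).1‖ := by
      intro n
      have hbf := h.res_bound (hgp n) Complex.I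
      rw [hgpe n] at hbf
      simpa using hbf
    have hz : Tendsto (fun n => (x n).2 - Complex.I • (x n).1) atTop (𝓝 0) := by
      have h2' : Tendsto (fun n => (x n).2) atTop (𝓝 (Complex.I • f)) :=
        (continuous_snd.tendsto _).comp hxl
      have := h2'.sub (hp1.const_smul Complex.I)
      simpa using this
    exact squeeze_zero_norm hb (by simpa using hz.norm)
  have hptend : Tendsto (fun n => (x n).1 - (gp n).1) atTop (𝓝 f) := by
    simpa using hp1.sub hgp0
  have hgamm : ∀ n, h.gop I_im_ne ((yy n).1) = (x n).1 - (gp n).1 := fun n =>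
    congrArg Prod.fst (hmemn n)
  have hcau : CauchySeq (fun n => h.Qt ((yy n).1)) := by
    rw [Metric.cauchySeq_iff]
    have hpc : CauchySeq (fun n => (x n).1 - (gp n).1) := hptend.cauchySeq
    rw [Metric.cauchySeq_iff] at hpc
    intro ε hε
    obtain ⟨N, hN⟩ := hpc ε hε
    refine ⟨N, fun a ha b hb => ?_⟩
    have hd : dist (h.Qt ((yy a).1)) (h.Qt ((yy b).1))
        = dist ((x a).1 - (gp a).1) ((x b).1 - (gp b).1) := by
      rw [dist_eq_norm, dist_eq_norm, ← map_sub, Submodule.coe_norm, Qt_coe, h.Qop_norm,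
        map_sub, hgamm a, hgamm b]
    rw [hd]
    exact hN a ha b hb
  obtain ⟨v, hv⟩ := cauchySeq_tendsto_of_complete hcau
  refine ⟨v, ?_⟩
  have ht1 : Tendsto (fun n => h.gbarL (h.Qt ((yy n).1))) atTop (𝓝 (h.gbarL v)) :=
    (h.gbarL.continuous.tendsto v).comp hv
  have heq2 : (fun n => h.gbarL (h.Qt ((yy n).1))) = fun n => (x n).1 - (gp n).1 :=
    funext fun n => by rw [h.gbarL_Qt, hgamm n]
  rw [heq2] at ht1
  exact tendsto_nhds_unique ht1 hptend

lemma decompS (h : BData A Γ) (p : E × E) (hp : p ∈ adjR A) :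
    ∃ q ∈ A0 Γ, ∃ v : HsSub Γ Complex.I,
      p = q + (h.gbarL v, Complex.I • h.gbarL v) := by
  obtain ⟨q, hq, hqe⟩ := h.res_exists I_im_ne (p.2 - Complex.I • p.1)
  have h2 : p.2 - q.2 = Complex.I • (p.1 - q.1) := by
    have hg2 : q.2 = p.2 - Complex.I • p.1 + Complex.I • q.1 := by rw [← hqe]; abel
    rw [hg2, smul_sub]; abel
  have hqS : q ∈ adjR A := by
    obtain ⟨b, hb⟩ := mem_A0.1 hq
    exact h.dom ⟨_, hb⟩
  have hsub := (adjR_linRel A).sub_mem hp hqS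
  have heq : p - q = (p.1 - q.1, Complex.I • (p.1 - q.1)) := Prod.ext rfl h2
  rw [heq] at hsub
  obtain ⟨v, hv⟩ := h.NS_sub_range _ hsub
  refine ⟨q, hq, v, ?_⟩
  rw [hv]
  refine Prod.ext ?_ ?_
  · show p.1 = q.1 + (p.1 - q.1)
    abel
  · show p.2 = q.2 + Complex.I • (p.1 - q.1)
    rw [← h2]; abel

lemma tau_eq (h : BData A Γ) {g g' : E} {b : F}
    (hmem : ((g, g'), ((0 : F), b)) ∈ Γ) :
    ContinuousLinearMap.adjoint (h.gop I_im_ne) (g' + Complex.I • g) = b := by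
  apply ext_inner_left ℂ
  intro u
  rw [ContinuousLinearMap.adjoint_inner_right]
  have hgr := h.green _ hmem _ (h.gop_Mop_mem I_im_ne u)
  simp only at hgr
  rw [inner_smul_left, Complex.conj_I, inner_zero_right, sub_zero] at hgr
  rw [inner_add_right, inner_smul_right]
  linear_combination hgr

/-- `E = Re M(i)`. -/
noncomputable def Eop' (h : BData A Γ) : F →L[ℂ] F :=
  (2 : ℂ)⁻¹ • (h.Mop I_im_ne + ContinuousLinearMap.adjoint (h.Mop I_im_ne))

lemma Eop_sa (h : BData A Γ) : IsSelfAdjoint h.Eop' := by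
  show star h.Eop' = h.Eop'
  unfold Eop'
  rw [star_smul, star_add, ContinuousLinearMap.star_eq_adjoint,
    ContinuousLinearMap.star_eq_adjoint, ContinuousLinearMap.adjoint_adjoint]
  rw [show (star ((2 : ℂ)⁻¹)) = (2 : ℂ)⁻¹ from by
    rw [Complex.star_def, map_inv₀, map_ofNat], add_comm]

lemma MiE (h : BData A Γ) : h.Eop' + Complex.I • h.Rim = h.Mop I_im_ne := by
  unfold Eop' Rim ImOp
  rw [smul_smul]
  have hsc : Complex.I * ((2 : ℂ) * Complex.I)⁻¹ = (2 : ℂ)⁻¹ := by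
    field_simp
  rw [hsc]
  have hgen : ∀ X Y : F →L[ℂ] F, (2 : ℂ)⁻¹ • (X + Y) + (2 : ℂ)⁻¹ • (X - Y) = X := by
    intro X Y
    rw [smul_add, smul_sub]
    have h4 : (2 : ℂ)⁻¹ • X + (2 : ℂ)⁻¹ • Y + ((2 : ℂ)⁻¹ • X - (2 : ℂ)⁻¹ • Y)
        = ((2 : ℂ)⁻¹ + (2 : ℂ)⁻¹) • X := by
      rw [add_smul]; abel
    rw [h4, show ((2 : ℂ)⁻¹ + (2 : ℂ)⁻¹) = 1 by norm_num, one_smul]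
  exact hgen _ _

/-- `Γ₁`-component map on `A₀`. -/
noncomputable def kappa (h : BData A Γ) (q : E × E) : HsSub Γ Complex.I :=
  ContinuousLinearMap.adjoint h.gbarL (q.2 + Complex.I • q.1)

lemma kappa_add (h : BData A Γ) (q r : E × E) :
    h.kappa (q + r) = h.kappa q + h.kappa r := by
  unfold kappa
  rw [← map_add]
  congr 1
  simp only [Prod.fst_add, Prod.snd_add, smul_add]
  abel

lemma kappa_smul (h : BData A Γ) (c : ℂ) (q : E × E) :
    h.kappa (c • q) = c • h.kappa q := by
  unfold kappa
  rw [← map_smul]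
  congr 1
  simp only [Prod.smul_fst, Prod.smul_snd, smul_add]
  rw [smul_comm c Complex.I]

lemma kappa_zero (h : BData A Γ) : h.kappa 0 = 0 := by
  unfold kappa
  simp

lemma Qt_adj_kappa (h : BData A Γ) (q : E × E) :
    ContinuousLinearMap.adjoint h.Qt (h.kappa q)
      = ContinuousLinearMap.adjoint (h.gop I_im_ne) (q.2 + Complex.I • q.1) :=
  h.Qt_adj_gbar _

lemma kappa_surj (h : BData A Γ) (z : HsSub Γ Complex.I) :
    ∃ q ∈ A0 Γ, h.kappa q = z := by
  have hne : (-Complex.I).im ≠ 0 := by simp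
  obtain ⟨q, hq, hqe⟩ := h.res_exists hne (h.gbarL z)
  refine ⟨q, hq, ?_⟩
  unfold kappa
  have he : q.2 + Complex.I • q.1 = h.gbarL z := by
    rw [← hqe, neg_smul]; abel
  rw [he, h.gbar_adj_gbar]

/-- The ordinary boundary triple. -/
noncomputable def Gam0 (h : BData A Γ) :
    Set ((E × E) × (HsSub Γ Complex.I × HsSub Γ Complex.I)) :=
  {p | ∃ q ∈ A0 Γ, p.1 = q + (h.gbarL p.2.1, Complex.I • h.gbarL p.2.1) ∧
       p.2.2 = h.kappa q + Complex.I • p.2.1}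

lemma gam0_lin (h : BData A Γ) : IsLinRel h.Gam0 := by
  obtain ⟨A0s, hA0s⟩ := h.a0lin
  let ψ : ((E × E) × HsSub Γ Complex.I) →ₗ[ℂ]
      ((E × E) × (HsSub Γ Complex.I × HsSub Γ Complex.I)) :=
    { toFun := fun r => (r.1 + (h.gbarL r.2, Complex.I • h.gbarL r.2),
        (r.2, h.kappa r.1 + Complex.I • r.2))
      map_add' := by
        intro a b
        refine Prod.ext (Prod.ext ?_ ?_) (Prod.ext ?_ ?_) <;>
          simp only [Prod.fst_add, Prod.snd_add, map_add, smul_add, h.kappa_add] <;> abel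
      map_smul' := by
        intro c a
        have e1 : h.gbarL (c • a.2) = c • h.gbarL a.2 := map_smul _ _ _
        refine Prod.ext (Prod.ext ?_ ?_) (Prod.ext ?_ ?_)
        · simp [e1]
        · simp [e1, smul_comm c Complex.I]
        · rfl
        · simp [h.kappa_smul, smul_comm c Complex.I, smul_add] }
  refine ⟨Submodule.map ψ (A0s.prod ⊤), ?_⟩
  ext p
  rw [SetLike.mem_coe, Submodule.mem_map]
  constructor
  · rintro ⟨r, hr, rfl⟩
    rw [Submodule.mem_prod] at hr
    refine ⟨r.1, ?_, rfl, rfl⟩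
    rw [← hA0s]
    exact hr.1
  · rintro ⟨q, hq, h1, h2⟩
    refine ⟨(q, p.2.1), ?_, ?_⟩
    · rw [Submodule.mem_prod]
      refine ⟨?_, trivial⟩
      show q ∈ A0s
      rw [← SetLike.mem_coe, hA0s]
      exact hq
    · refine Prod.ext h1.symm (Prod.ext rfl h2.symm)

lemma gam0_mul (h : BData A Γ) : mulR h.Gam0 = {0} := by
  ext x
  simp only [mulR, Set.mem_setOf_eq, Set.mem_singleton_iff]
  constructor
  · rintro ⟨q, hq, h1, h2⟩
    simp only at h1 h2
    have hqe : q = -(h.gbarL x.1, Complex.I • h.gbarL x.1) := by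
      have h1' : q + (h.gbarL x.1, Complex.I • h.gbarL x.1) = 0 := h1.symm
      exact eq_neg_of_add_eq_zero_left h1'
    have hmemA : (h.gbarL x.1, Complex.I • h.gbarL x.1) ∈ A0 Γ := by
      have := h.a0lin.neg_mem (hqe ▸ hq)
      simpa using this
    have hself := h.a0symm hmemA hmemA
    simp only at hself
    rw [inner_smul_right, inner_smul_left, Complex.conj_I] at hself
    have h0 : (2 * Complex.I) * ⟪h.gbarL x.1, h.gbarL x.1⟫ = 0 := by
      linear_combination hself
    have hs : ⟪h.gbarL x.1, h.gbarL x.1⟫ = 0 := by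
      rcases mul_eq_zero.1 h0 with hc | hc
      · exact absurd hc (by simp [Complex.I_ne_zero])
      · exact hc
    have hx1 : x.1 = 0 := h.gbar_inj (inner_self_eq_zero.1 hs)
    have hq0 : q = 0 := by rw [hqe, hx1]; simp
    have hx2 : x.2 = 0 := by
      rw [h2, hq0, hx1, h.kappa_zero]
      simp
    exact Prod.ext hx1 hx2
  · rintro rfl
    refine ⟨0, h.a0lin.zero_mem, ?_, ?_⟩
    · simp; rfl
    · rw [h.kappa_zero]
      simp

lemma gam0_green (h : BData A Γ) : GreenPair h.Gam0 := by
  rintro p ⟨q, hq, hp1, hp2⟩ p' ⟨r, hr, hr1, hr2⟩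
  rw [hp1, hr1, hp2, hr2]
  have ha0 := h.a0symm hr hq
  have hk1 : ⟪p'.2.1, h.kappa q⟫
      = ⟪h.gbarL p'.2.1, q.2⟫ + Complex.I * ⟪h.gbarL p'.2.1, q.1⟫ := by
    unfold kappa
    rw [ContinuousLinearMap.adjoint_inner_right, inner_add_right, inner_smul_right]
  have hk2 : ⟪h.kappa r, p.2.1⟫
      = ⟪r.2, h.gbarL p.2.1⟫ - Complex.I * ⟪r.1, h.gbarL p.2.1⟫ := by
    unfold kappa
    rw [ContinuousLinearMap.adjoint_inner_left, inner_add_left, inner_smul_left,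
      Complex.conj_I]
    ring
  have hbb := h.gbar_inner p'.2.1 p.2.1
  simp only [Prod.fst_add, Prod.snd_add, inner_add_left, inner_add_right, inner_smul_left,
    inner_smul_right, Complex.conj_I]
  rw [hk1, hk2, hbb]
  linear_combination ha0

lemma gam0_dom (h : BData A Γ) : domR h.Gam0 = adjR A := by
  ext x
  constructor
  · rintro ⟨y, q, hq, h1, h2⟩
    simp only at h1 h2
    rw [h1]
    obtain ⟨b, hb⟩ := mem_A0.1 hq
    exact (adjR_linRel A).add_mem (h.dom ⟨_, hb⟩) (h.gbar_in_NS y.1)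
  · intro hx
    obtain ⟨q, hq, v, hv⟩ := h.decompS x hx
    exact ⟨(v, h.kappa q + Complex.I • v), q, hq, hv, rfl⟩

lemma gam0_ran (h : BData A Γ) : ranR h.Gam0 = Set.univ := by
  ext z
  simp only [Set.mem_univ, iff_true]
  obtain ⟨q, hq, hk⟩ := h.kappa_surj (z.2 - Complex.I • z.1)
  refine ⟨q + (h.gbarL z.1, Complex.I • h.gbarL z.1), q, hq, rfl, ?_⟩
  show z.2 = h.kappa q + Complex.I • z.1
  rw [hk]
  abel

lemma gamma_eq (h : BData A Γ) :
    Γ = {p : (E × E) × (F × F) | ∃ v w : HsSub Γ Complex.I,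
        (p.1, (v, w)) ∈ h.Gam0 ∧ h.Qt p.2.1 = v ∧
        p.2.2 = h.Eop' p.2.1 + ContinuousLinearMap.adjoint h.Qt w} := by
  have hmie : ∀ u : F, h.Eop' u + Complex.I • h.Rim u = h.Mop I_im_ne u := by
    intro u
    have hm := ContinuousLinearMap.ext_iff.1 h.MiE u
    simpa using hm
  ext pp
  obtain ⟨x, hu, hu'⟩ := pp
  constructor
  · intro hp
    obtain ⟨q, hq, hqe⟩ := h.res_exists I_im_ne (x.2 - Complex.I • x.1)
    obtain ⟨b, hb⟩ := mem_A0.1 hq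
    have hd := h.lin.sub_mem hp hb
    have h2 : x.2 - q.2 = Complex.I • (x.1 - q.1) := by
      have hg2 : q.2 = x.2 - Complex.I • x.1 + Complex.I • q.1 := by rw [← hqe]; abel
      rw [hg2, smul_sub]; abel
    have heq : (x, (hu, hu')) - (q, ((0 : F), b))
        = ((x.1 - q.1, Complex.I • (x.1 - q.1)), (hu, hu' - b)) :=
      Prod.ext (Prod.ext rfl h2) (Prod.ext (sub_zero _) rfl)
    rw [heq] at hd
    have hgm := h.gm_eq I_im_ne hd
    have hgam : h.gop I_im_ne hu = x.1 - q.1 := congrArg Prod.fst hgm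
    have hM : h.Mop I_im_ne hu = hu' - b := congrArg Prod.snd hgm
    refine ⟨h.Qt hu, h.kappa q + Complex.I • h.Qt hu, ⟨q, hq, ?_, rfl⟩, rfl, ?_⟩
    · show x = q + (h.gbarL (h.Qt hu), Complex.I • h.gbarL (h.Qt hu))
      rw [h.gbarL_Qt, hgam]
      refine Prod.ext ?_ ?_
      · show x.1 = q.1 + (x.1 - q.1)
        abel
      · show x.2 = q.2 + Complex.I • (x.1 - q.1)
        rw [← h2]; abel
    · show hu' = h.Eop' hu + ContinuousLinearMap.adjoint h.Qt (h.kappa q + Complex.I • h.Qt hu)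
      rw [map_add, map_smul, h.Qt_adj_kappa, h.tau_eq hb, h.Qt_adj_Qt]
      have hMb : hu' = h.Mop I_im_ne hu + b := by rw [hM]; abel
      rw [hMb, ← hmie hu]
      abel
  · rintro ⟨v, w, ⟨q, hq, h1, h2⟩, hQv, hE⟩
    simp only at h1 h2 hQv hE
    obtain ⟨b, hb⟩ := mem_A0.1 hq
    have hγ : h.gbarL v = h.gop I_im_ne hu := by rw [← hQv, h.gbarL_Qt]
    have hsum := h.lin.add_mem hb (h.gop_Mop_mem I_im_ne hu)
    have hx : q + ((h.gop I_im_ne hu, Complex.I • h.gop I_im_ne hu) : E × E) = x := by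
      rw [h1, hγ]
    have heq2 : ((q, ((0 : F), b))
        + ((h.gop I_im_ne hu, Complex.I • h.gop I_im_ne hu), (hu, h.Mop I_im_ne hu)))
        = (x, (hu, b + h.Mop I_im_ne hu)) := by
      refine Prod.ext hx (Prod.ext (zero_add _) rfl)
    rw [heq2] at hsum
    have hfin : hu' = b + h.Mop I_im_ne hu := by
      rw [hE, h2, map_add, map_smul, h.Qt_adj_kappa, h.tau_eq hb, ← hQv, h.Qt_adj_Qt,
        ← hmie hu]
      abel
    rw [show ((x, (hu, hu')) : (E × E) × F × F) = (x, (hu, b + h.Mop I_im_ne hu)) from by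
      rw [hfin]]
    exact hsum

lemma weyl_form (h : BData A Γ) (l : ℂ) :
    weyl Γ l = {p : F × F | ∃ w : HsSub Γ Complex.I,
      (h.Qt p.1, w) ∈ weyl h.Gam0 l ∧
      p.2 = ContinuousLinearMap.adjoint h.Qt w + h.Eop' p.1} := by
  ext p
  constructor
  · rintro ⟨f, hf⟩
    rw [h.gamma_eq] at hf
    obtain ⟨v, w, h0, hQ, hE⟩ := hf
    simp only at h0 hQ hE
    refine ⟨w, ⟨f, ?_⟩, ?_⟩
    · rw [hQ]
      exact h0
    · rw [hE, add_comm]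
  · rintro ⟨w, ⟨f, hf0⟩, hE⟩
    refine ⟨f, ?_⟩
    rw [h.gamma_eq]
    exact ⟨h.Qt p.1, w, hf0, rfl, by rw [hE, add_comm]⟩

lemma ker_Qt (h : BData A Γ) :
    {u : F | h.Qt u = 0} = ((HsSub Γ Complex.I)ᗮ : Set F) := by
  have hker : IsClosed ((LinearMap.ker (h.gop I_im_ne : F →ₗ[ℂ] E) : Submodule ℂ F) : Set F) := by
    have heq : ((LinearMap.ker (h.gop I_im_ne : F →ₗ[ℂ] E) : Submodule ℂ F) : Set F)
        = (h.gop I_im_ne) ⁻¹' {0} := by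
      ext u
      simp [LinearMap.mem_ker]
    rw [heq]
    exact IsClosed.preimage (h.gop I_im_ne).continuous isClosed_singleton
  have hHs : (HsSub Γ Complex.I)ᗮ = LinearMap.ker (h.gop I_im_ne : F →ₗ[ℂ] E) := by
    rw [h.hssub_eq I_im_ne, Submodule.orthogonal_orthogonal_eq_closure]
    apply le_antisymm
    · exact Submodule.topologicalClosure_minimal _ le_rfl hker
    · exact Submodule.le_topologicalClosure _
  ext u
  simp only [Set.mem_setOf_eq, SetLike.mem_coe, hHs, LinearMap.mem_ker]
  constructor
  · intro hz
    apply (h.Qop_ker_iff u).1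
    rw [← h.Qt_coe, hz]
    rfl
  · intro hz
    apply Subtype.ext
    rw [Qt_coe]
    exact (h.Qop_ker_iff u).2 hz

end BData

/-- every B-generalized boundary pair is a triangular transform of an
ordinary boundary triple on `𝓗_s = clos (ran Im M(λ))`, with `M = G*M₀G + E`. -/
theorem statement9 (A : Set (E × E)) (Γ : Set ((E × E) × (F × F)))
    (hA : IsClosedSymRel A) (hB : IsBPair A Γ) :
    (∀ l m : ℂ, l.im ≠ 0 → m.im ≠ 0 → HsSub Γ l = HsSub Γ m) ∧
    ∃ Γ0 : Set ((E × E) × (↥(HsSub Γ Complex.I) × ↥(HsSub Γ Complex.I))),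
      IsOrdinaryBT A Γ0 ∧
      ∃ Eop : F →L[ℂ] F, IsSelfAdjoint Eop ∧
      ∃ G : F →L[ℂ] ↥(HsSub Γ Complex.I),
        {u : F | G u = 0} = ((HsSub Γ Complex.I)ᗮ : Set F) ∧
        Γ = {q : (E × E) × (F × F) | ∃ v w : ↥(HsSub Γ Complex.I),
            (q.1, (v, w)) ∈ Γ0 ∧ G q.2.1 = v ∧
            q.2.2 = Eop q.2.1 + ContinuousLinearMap.adjoint G w} ∧
        ∀ l : ℂ, l.im ≠ 0 →
          weyl Γ l = {p : F × F | ∃ w : ↥(HsSub Γ Complex.I),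
            (G p.1, w) ∈ weyl Γ0 l ∧ p.2 = ContinuousLinearMap.adjoint G w + Eop p.1} := by
  have h := isBPair_bdata hB
  refine ⟨fun l m hl hm => h.hs_indep hl hm,
    h.Gam0, ⟨⟨h.gam0_lin, ?_, h.gam0_green⟩, h.gam0_mul, h.gam0_dom, h.gam0_ran⟩,
    h.Eop', h.Eop_sa, h.Qt, h.ker_Qt, h.gamma_eq, fun l _ => h.weyl_form l⟩
  rw [h.gam0_dom]

end S9Aux

end BT
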